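/- Let n ≥ 1, let L be a first-order language, M an L-structure, and φ(y_0,…,y_{n-1},x) an L-formula with n+1 variable groups. For σ ∈ Sym({0,…,n}) let φ_σ(z_0,…,z_n) := φ(y^0_{σ(0)},…,y^{n-1}_{σ(n-1)}, x_{σ(n)}), where z_i = (y^0_i,…,y^{n-1}_i, x_i), and let ψ_φ := ⋁_{σ} φ_σ. If ψ_φ encodes every finite (n+1)-partite (n+1)-uniform hypergraph in M (part P_i plugged into group z_i), then there exists a permutation σ ∈ Sym({0,…,n}) such that φ_σ encodes every finite (n+1)-partite (n+1)-uniform hypergraph in M. -/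

import Mathlib

open FirstOrder Language

universe u x y z

/-- An `(n+1)`-partite `(n+1)`-uniform hypergraph, presented by its parts and its set of
(cross) edges. -/
structure PartiteHG (n : ℕ) : Type (u + 1) where
  P : Fin (n + 1) → Type u
  E : (∀ i, P i) → Prop

/-- Finite disjunction of a list of formulas. -/
def bigOr {L : FirstOrder.Language.{x, y}} {α : Type*} : List (L.Formula α) → L.Formula α
  | [] => BoundedFormula.falsum
  | χ :: l => χ.not.imp (bigOr l)

/-- The relabeling of the variables of `φ(y₀, …, y_{n-1}, x)` corresponding to the substitution
`φ(y⁰_{σ 0}, …, y^{n-1}_{σ (n-1)}, x_{σ n})`, where `z i = (y⁰_i, …, y^{n-1}_i, x_i)` is the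
`i`-th of the `n+1` new variable groups. -/
def groupMap {n d₀ : ℕ} {d : Fin n → ℕ} (σ : Equiv.Perm (Fin (n + 1))) :
    ((Σ j : Fin n, Fin (d j)) ⊕ Fin d₀) →
      Fin (n + 1) × ((Σ j : Fin n, Fin (d j)) ⊕ Fin d₀)
  | Sum.inl p => (σ p.1.castSucc, Sum.inl p)
  | Sum.inr k => (σ (Fin.last n), Sum.inr k)

/-- The formula `φ_σ(z₀, …, z_n) = φ(y⁰_{σ 0}, …, y^{n-1}_{σ (n-1)}, x_{σ n})`. -/
def phiSigma {L : FirstOrder.Language.{x, y}} {n d₀ : ℕ} {d : Fin n → ℕ}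
    (φ : L.Formula ((Σ j : Fin n, Fin (d j)) ⊕ Fin d₀)) (σ : Equiv.Perm (Fin (n + 1))) :
    L.Formula (Fin (n + 1) × ((Σ j : Fin n, Fin (d j)) ⊕ Fin d₀)) :=
  Formula.relabel (groupMap σ) φ

/-- The symmetrization `ψ_φ(z₀, …, z_n) = ⋁_{σ ∈ Sym(n+1)} φ_σ(z₀, …, z_n)`. -/
noncomputable def psiPhi {L : FirstOrder.Language.{x, y}} {n d₀ : ℕ} {d : Fin n → ℕ}
    (φ : L.Formula ((Σ j : Fin n, Fin (d j)) ⊕ Fin d₀)) :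
    L.Formula (Fin (n + 1) × ((Σ j : Fin n, Fin (d j)) ⊕ Fin d₀)) :=
  bigOr (((Finset.univ : Finset (Equiv.Perm (Fin (n + 1)))).toList).map (phiSigma φ))

/-- A formula `ψ(z₀, …, z_n)` with `n+1` variable groups, each a copy of `V`, encodes the
partite hypergraph `H` in `M` (part `P i` plugged into group `z i`). -/
def EncodesV (L : FirstOrder.Language.{x, y}) (M : Type z) [L.Structure M] {n : ℕ}
    {V : Type*} (ψ : L.Formula (Fin (n + 1) × V)) (H : PartiteHG.{u} n) : Prop :=
  ∃ a : (i : Fin (n + 1)) → H.P i → V → M,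
    ∀ g : ∀ i, H.P i, ((ψ.Realize fun p => a p.1 (g p.1) p.2) ↔ H.E g)

theorem bigOr_realize {L : FirstOrder.Language.{x, y}} {M : Type z} [L.Structure M] {α : Type*}
    (l : List (L.Formula α)) (v : α → M) :
    (bigOr l).Realize v ↔ ∃ χ ∈ l, χ.Realize v := by
  induction l with
  | nil =>
    simp only [bigOr, List.not_mem_nil, false_and, exists_false, iff_false]
    exact fun h => h
  | cons χ l ih =>
    have : (bigOr (χ :: l)).Realize v ↔ (¬ χ.Realize v → (bigOr l).Realize v) := by
      rw [show bigOr (χ :: l) = χ.not.imp (bigOr l) from rfl]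
      rw [Formula.realize_imp, Formula.realize_not]
    rw [this, ih]
    constructor
    · intro h
      by_cases hχ : χ.Realize v
      · exact ⟨χ, List.mem_cons_self, hχ⟩
      · obtain ⟨χ', h1, h2⟩ := h hχ
        exact ⟨χ', List.mem_cons_of_mem _ h1, h2⟩
    · rintro ⟨χ', h1, h2⟩ h
      rcases List.mem_cons.1 h1 with rfl | h1
      · exact absurd h2 h
      · exact ⟨χ', h1, h2⟩

theorem psiPhi_realize {L : FirstOrder.Language.{x, y}} {M : Type z} [L.Structure M]
    {n d₀ : ℕ} {d : Fin n → ℕ} (φ : L.Formula ((Σ j : Fin n, Fin (d j)) ⊕ Fin d₀))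
    (v : Fin (n + 1) × ((Σ j : Fin n, Fin (d j)) ⊕ Fin d₀) → M) :
    (psiPhi φ).Realize v ↔ ∃ σ : Equiv.Perm (Fin (n + 1)), (phiSigma φ σ).Realize v := by
  rw [psiPhi, bigOr_realize]
  constructor
  · rintro ⟨χ, hχ, h⟩
    obtain ⟨σ, -, rfl⟩ := List.mem_map.1 hχ
    exact ⟨σ, h⟩
  · rintro ⟨σ, h⟩
    exact ⟨phiSigma φ σ, List.mem_map.2 ⟨σ, Finset.mem_toList.2 (Finset.mem_univ σ), rfl⟩, h⟩

/-- Key step (the partite lemma via Hales–Jewett): if `ψ_φ` encodes every finite hypergraph,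
then each single finite hypergraph is already encoded by some single `φ_σ`. -/
theorem key_step {n : ℕ} {L : FirstOrder.Language.{x, y}} {M : Type z} [L.Structure M]
    {d₀ : ℕ} {d : Fin n → ℕ} (φ : L.Formula ((Σ j : Fin n, Fin (d j)) ⊕ Fin d₀))
    (hψ : ∀ H : PartiteHG.{u} n, (∀ i, Finite (H.P i)) → EncodesV L M (psiPhi φ) H)
    (H : PartiteHG.{u} n) (hfin : ∀ i, Finite (H.P i)) :
    ∃ σ : Equiv.Perm (Fin (n + 1)), EncodesV L M (phiSigma φ σ) H := by
  classical
  haveI : ∀ i, Finite (H.P i) := hfin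
  by_cases hΛ : Nonempty {e : ∀ i, H.P i // H.E e}
  · -- main case: H has at least one edge
    set Λ := {e : ∀ i, H.P i // H.E e} with hΛdef
    haveI : Finite Λ := Subtype.finite
    obtain ⟨ι, hι, hHJ⟩ :=
      Combinatorics.Line.exists_mono_in_high_dimension Λ (Equiv.Perm (Fin (n + 1)))
    haveI := hι
    -- the blown-up hypergraph B
    let B : PartiteHG.{u} n :=
      ⟨fun i => (ι → H.P i) ⊕ H.P i,
       fun h => ∃ w : ι → Λ, ∀ i, h i = Sum.inl fun t => (w t).1 i⟩
    have hBfin : ∀ i, Finite (B.P i) := fun i => by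
      show Finite ((ι → H.P i) ⊕ H.P i); infer_instance
    obtain ⟨a, ha⟩ := hψ B hBfin
    -- the B-edge associated to a word
    let gw : (ι → Λ) → ∀ i, B.P i := fun w i => Sum.inl fun t => (w t).1 i
    have hC : ∀ w : ι → Λ,
        ∃ σ : Equiv.Perm (Fin (n + 1)),
          (phiSigma φ σ).Realize fun p => a p.1 (gw w p.1) p.2 := by
      intro w
      have hE : B.E (gw w) := ⟨w, fun i => rfl⟩
      exact (psiPhi_realize φ _).1 ((ha (gw w)).2 hE)
    obtain ⟨l, σ0, hmono⟩ := hHJ fun w => (hC w).choose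
    refine ⟨σ0, ?_⟩
    -- the embedding of H into B selected by the line l
    let f : ∀ i, H.P i → B.P i := fun i v =>
      if h : ∃ e : Λ, e.1 i = v then Sum.inl fun t => ((l.idxFun t).getD h.choose).1 i
      else Sum.inr v
    refine ⟨fun i v => a i (f i v), fun g => ?_⟩
    by_cases hg : H.E g
    · -- edges: f g is the point of the line at ⟨g, hg⟩, which has color σ0
      have heq : (fun p : Fin (n + 1) × ((Σ j : Fin n, Fin (d j)) ⊕ Fin d₀) =>
            a p.1 (f p.1 (g p.1)) p.2)
          = fun p => a p.1 (gw (l ⟨g, hg⟩) p.1) p.2 := by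
        funext p
        have hcov : ∃ e : Λ, e.1 p.1 = g p.1 := ⟨⟨g, hg⟩, rfl⟩
        have hf : f p.1 (g p.1) = Sum.inl fun t => ((l.idxFun t).getD hcov.choose).1 p.1 :=
          dif_pos hcov
        have hfw : f p.1 (g p.1) = gw (l ⟨g, hg⟩) p.1 := by
          rw [hf]
          show _ = Sum.inl fun t => ((l ⟨g, hg⟩) t).1 p.1
          congr 1
          funext t
          rw [Combinatorics.Line.coe_apply]
          cases ht : l.idxFun t with
          | some u => simp [ht]
          | none => simp [ht, hcov.choose_spec]
        rw [hfw]
      simp only [hg, iff_true]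
      have hspec := (hC (l ⟨g, hg⟩)).choose_spec
      have hcolor : (hC (l ⟨g, hg⟩)).choose = σ0 := hmono ⟨g, hg⟩
      rw [hcolor] at hspec
      rw [heq]
      exact hspec
    · -- non-edges: f g cannot be a B-edge, so ψ (hence φ_σ0) fails on it
      simp only [hg, iff_false]
      intro hr
      have hψr : (psiPhi φ).Realize fun p => a p.1 (f p.1 (g p.1)) p.2 :=
        (psiPhi_realize φ _).2 ⟨σ0, hr⟩
      have hBE : B.E fun i => f i (g i) := (ha fun i => f i (g i)).1 hψr
      obtain ⟨w, hw⟩ := hBE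
      obtain ⟨t0, ht0⟩ := l.proper
      apply hg
      have hwg : (w t0).1 = g := by
        funext i
        have hwi : f i (g i) = Sum.inl fun t => (w t).1 i := hw i
        by_cases hcov : ∃ e : Λ, e.1 i = g i
        · have hf : f i (g i) = Sum.inl fun t => ((l.idxFun t).getD hcov.choose).1 i :=
            dif_pos hcov
          rw [hf] at hwi
          have h2 := congrFun (Sum.inl.inj hwi) t0
          rw [ht0] at h2
          simpa [hcov.choose_spec] using h2.symm
        · have hf : f i (g i) = Sum.inr (g i) := dif_neg hcov
          rw [hf] at hwi
          exact absurd hwi (by simp)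
      rw [← hwg]
      exact (w t0).2
  · -- degenerate case: H has no edges; any σ works via the ψ-encoding of H
    refine ⟨1, ?_⟩
    obtain ⟨a, ha⟩ := hψ H hfin
    refine ⟨a, fun g => ?_⟩
    constructor
    · intro hr
      exact (ha g).1 ((psiPhi_realize φ _).2 ⟨1, hr⟩)
    · intro hEg
      exact absurd ⟨⟨g, hEg⟩⟩ hΛ

/-- If the symmetrization `ψ_φ` of `φ(y₀, …, y_{n-1}, x)` encodes every finite
`(n+1)`-partite `(n+1)`-uniform hypergraph in `M`, then already some single `φ_σ` encodes
every finite `(n+1)`-partite `(n+1)`-uniform hypergraph in `M`. -/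
theorem psi_encodes_implies_phiSigma_encodes {n : ℕ} (hn : 1 ≤ n)
    {L : FirstOrder.Language.{x, y}} {M : Type z} [L.Structure M]
    {d₀ : ℕ} {d : Fin n → ℕ} (φ : L.Formula ((Σ j : Fin n, Fin (d j)) ⊕ Fin d₀))
    (hψ : ∀ H : PartiteHG.{u} n, (∀ i, Finite (H.P i)) → EncodesV L M (psiPhi φ) H) :
    ∃ σ : Equiv.Perm (Fin (n + 1)),
      ∀ H : PartiteHG.{u} n, (∀ i, Finite (H.P i)) → EncodesV L M (phiSigma φ σ) H := by
  classical
  by_contra hcon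
  push_neg at hcon
  choose Hc hcfin hnot using hcon
  -- disjoint union of the counterexamples, with edges within components only
  let Hs : PartiteHG.{u} n :=
    ⟨fun i => Σ σ : Equiv.Perm (Fin (n + 1)), (Hc σ).P i,
     fun g => ∃ (σ : Equiv.Perm (Fin (n + 1))) (h : ∀ i, (Hc σ).P i),
       (∀ i, g i = ⟨σ, h i⟩) ∧ (Hc σ).E h⟩
  have hsfin : ∀ i, Finite (Hs.P i) := fun i => by
    haveI : ∀ σ : Equiv.Perm (Fin (n + 1)), Finite ((Hc σ).P i) := fun σ => hcfin σ i
    show Finite (Σ σ : Equiv.Perm (Fin (n + 1)), (Hc σ).P i)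
    infer_instance
  obtain ⟨σ0, a, ha⟩ := key_step φ hψ Hs hsfin
  apply hnot σ0
  refine ⟨fun i v => a i ⟨σ0, v⟩, fun g => ?_⟩
  have h1 := ha fun i => ⟨σ0, g i⟩
  refine Iff.trans h1 ?_
  constructor
  · rintro ⟨σ, h, hgh, hE⟩
    have h0 := hgh 0
    obtain ⟨rfl, -⟩ := Sigma.mk.inj_iff.1 h0
    have hhg : h = g := funext fun i => (eq_of_heq (Sigma.mk.inj_iff.1 (hgh i)).2).symm
    rw [← hhg]
    exact hE
  · intro hE
    exact ⟨σ0, g, fun i => rfl, hE⟩
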